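/- Changing k coordinates of the input to g^(mid) decreases its output by at most 4k/n: if t, t' ∈ [-1,1]^n differ in at most k coordinates, then g^(mid)(t') ≥ g^(mid)(t) − 4k/n. -/

import Mathlib

open Finset

/-- The solid hypercube `[-1,1]^n`. -/
def cube (n : ℕ) : Set (Fin n → ℝ) := {t | ∀ i, t i ∈ Set.Icc (-1 : ℝ) 1}

/-- The solid hypercube `[0,1]^n`. -/
def cube01 (n : ℕ) : Set (Fin n → ℝ) := {t | ∀ i, t i ∈ Set.Icc (0 : ℝ) 1}

/-- `D` is a probability distribution over subsets of `[n]`. -/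
def IsDist {n : ℕ} (D : Finset (Fin n) → ℝ) : Prop :=
  (∀ R, 0 ≤ D R) ∧ ∑ R : Finset (Fin n), D R = 1

/-- `D` is `α`-light: each coordinate is corrupted with (marginal) probability at most `α`. -/
def IsLight {n : ℕ} (D : Finset (Fin n) → ℝ) (α : ℝ) : Prop :=
  ∀ i : Fin n, ∑ R ∈ Finset.univ.filter (fun R => i ∈ R), D R ≤ α

/-- `min { g t' : t' ∈ K, t' ⊳_R t }`, the worst-case corruption of `t` on `R` within `K`. -/
noncomputable def corruptMin {n : ℕ} (K : Set (Fin n → ℝ)) (g : (Fin n → ℝ) → ℝ)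
    (R : Finset (Fin n)) (t : Fin n → ℝ) : ℝ :=
  sInf (g '' {t' ∈ K | ∀ i ∉ R, t' i = t i})

/-- `g : K → ℝ` is `β`-(noise-)stable. -/
def Stable {n : ℕ} (K : Set (Fin n → ℝ)) (g : (Fin n → ℝ) → ℝ) (β : ℝ) : Prop :=
  ∀ t ∈ K, ∀ α : ℝ, α ∈ Set.Ioc (0 : ℝ) 1 →
    ∀ D : Finset (Fin n) → ℝ, IsDist D → IsLight D α →
      g t - α * β ≤ ∑ R : Finset (Fin n), D R * corruptMin K g R t

/-- `g` is `c`-Lipschitz on `K` with respect to the `L^∞` norm. -/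
def LipschitzLinf {n : ℕ} (K : Set (Fin n → ℝ)) (g : (Fin n → ℝ) → ℝ) (c : ℝ) : Prop :=
  ∀ t ∈ K, ∀ t' ∈ K, ∀ d : ℝ, 0 ≤ d → (∀ i, |t i - t' i| ≤ d) → |g t - g t'| ≤ c * d

/-- The `i`-th largest entry of `t` (1-indexed): `t_[i]`. -/
noncomputable def kthLargest {n : ℕ} (t : Fin n → ℝ) (i : ℕ) : ℝ :=
  ((List.ofFn t).insertionSort (· ≥ ·)).getD (i - 1) 0

/-- `g^(mid)`: the average of all entries except the top and bottom quartiles. -/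
noncomputable def gmid {n : ℕ} (t : Fin n → ℝ) : ℝ :=
  ((((3 * n + 3) / 4 - n / 4 : ℕ) : ℝ))⁻¹ *
    ∑ i ∈ Finset.Icc (n / 4 + 1) ((3 * n + 3) / 4), kthLargest t i

section AuxGmid

variable {n : ℕ}

private lemma lenSort (t : Fin n → ℝ) :
    ((List.ofFn t).insertionSort (· ≥ ·)).length = n := by
  rw [List.length_insertionSort, List.length_ofFn]

private lemma sorted_le (t : Fin n → ℝ) {i j : ℕ} (hij : i ≤ j)
    (hj : j < ((List.ofFn t).insertionSort (· ≥ ·)).length) :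
    ((List.ofFn t).insertionSort (· ≥ ·))[j] ≤
      ((List.ofFn t).insertionSort (· ≥ ·))[i]'(lt_of_le_of_lt hij hj) := by
  have h := (List.pairwise_insertionSort (· ≥ ·) (List.ofFn t)).rel_get_of_le
    (a := ⟨i, lt_of_le_of_lt hij hj⟩) (b := ⟨j, hj⟩) hij
  simpa [List.get_eq_getElem] using h

private lemma countP_sort (t : Fin n → ℝ) (v : ℝ) :
    ((List.ofFn t).insertionSort (· ≥ ·)).countP (fun x => decide (v ≤ x))
      = (univ.filter fun i => v ≤ t i).card := by
  rw [(List.perm_insertionSort _ _).countP_eq, List.ofFn_eq_map, List.countP_map,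
      List.countP_eq_length_filter]
  rfl

private lemma kth_getElem (t : Fin n → ℝ) {i : ℕ} (h1 : 1 ≤ i) (h2 : i ≤ n) :
    kthLargest t i = ((List.ofFn t).insertionSort (· ≥ ·))[i - 1]'(by rw [lenSort]; omega) :=
  List.getD_eq_getElem _ 0 _

private lemma le_card_ge (t : Fin n → ℝ) {i : ℕ} (h1 : 1 ≤ i) (h2 : i ≤ n) :
    i ≤ (univ.filter fun j => kthLargest t i ≤ t j).card := by
  rw [← countP_sort]
  set l := (List.ofFn t).insertionSort (· ≥ ·) with hl
  have hlen : l.length = n := lenSort t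
  have htake : (l.take i).countP (fun x => decide (kthLargest t i ≤ x)) = (l.take i).length := by
    rw [List.countP_eq_length]
    intro x hx
    rw [List.mem_take_iff_getElem] at hx
    obtain ⟨j, hj, rfl⟩ := hx
    simp only [decide_eq_true_eq]
    rw [kth_getElem t h1 h2]
    exact sorted_le t (by omega) (by rw [lenSort]; omega)
  have hlt : (l.take i).length = i := by rw [List.length_take]; omega
  calc i = (l.take i).countP (fun x => decide (kthLargest t i ≤ x)) := by rw [htake, hlt]
    _ ≤ l.countP _ := (List.take_sublist i l).countP_le

private lemma kth_ge_of_card (t : Fin n → ℝ) {i : ℕ} {v : ℝ} (h1 : 1 ≤ i)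
    (hc : i ≤ (univ.filter fun j => v ≤ t j).card) : v ≤ kthLargest t i := by
  have h2 : i ≤ n := le_trans hc (le_trans (card_filter_le _ _) (by simp))
  by_contra hlt
  push_neg at hlt
  rw [← countP_sort] at hc
  set l := (List.ofFn t).insertionSort (· ≥ ·) with hl
  have hlen : l.length = n := lenSort t
  have hsplit : l.countP (fun x => decide (v ≤ x)) =
      (l.take (i-1)).countP (fun x => decide (v ≤ x)) +
      (l.drop (i-1)).countP (fun x => decide (v ≤ x)) := by
    rw [← List.countP_append, List.take_append_drop]
  have hdrop : (l.drop (i-1)).countP (fun x => decide (v ≤ x)) = 0 := by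
    rw [List.countP_eq_zero]
    intro x hx
    rw [List.mem_drop_iff_getElem] at hx
    obtain ⟨j, hj, rfl⟩ := hx
    simp only [decide_eq_true_eq, not_le]
    calc l[i - 1 + j] ≤ l[i - 1]'(by omega) := sorted_le t (by omega) (by rw [lenSort]; omega)
      _ < v := by rw [← kth_getElem t h1 h2]; exact hlt
  have hle : (l.take (i-1)).countP (fun x => decide (v ≤ x)) ≤ i - 1 := by
    calc _ ≤ (l.take (i-1)).length := List.countP_le_length
      _ ≤ i - 1 := by rw [List.length_take]; omega
  omega

private lemma kth_shift (t t' : Fin n → ℝ) {k i : ℕ}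
    (hdiff : (univ.filter fun j => t j ≠ t' j).card ≤ k)
    (h1 : 1 ≤ i) (h2 : i + k ≤ n) :
    kthLargest t (i + k) ≤ kthLargest t' i := by
  classical
  set v := kthLargest t (i + k) with hv
  have hA : i + k ≤ (univ.filter fun j => v ≤ t j).card := le_card_ge t (by omega) h2
  apply kth_ge_of_card t' h1
  have hsub : (univ.filter fun j => v ≤ t j) \ (univ.filter fun j => t j ≠ t' j)
      ⊆ univ.filter fun j => v ≤ t' j := by
    intro j hj
    simp only [Finset.mem_sdiff, Finset.mem_filter, Finset.mem_univ, true_and, not_not] at hj ⊢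
    rw [← hj.2]; exact hj.1
  have h3 := Finset.card_le_card_sdiff_add_card (s := univ.filter fun j => v ≤ t j)
    (t := univ.filter fun j => t j ≠ t' j)
  have h4 := Finset.card_le_card hsub
  omega

private lemma kth_mem (t : Fin n → ℝ) {i : ℕ} (h1 : 1 ≤ i) (h2 : i ≤ n) :
    ∃ j, kthLargest t i = t j := by
  rw [kth_getElem t h1 h2]
  have hmem : ((List.ofFn t).insertionSort (· ≥ ·))[i-1]'(by rw [lenSort]; omega)
      ∈ (List.ofFn t).insertionSort (· ≥ ·) := List.getElem_mem _
  rw [(List.perm_insertionSort _ _).mem_iff, List.mem_ofFn] at hmem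
  obtain ⟨j, hj⟩ := hmem
  exact ⟨j, hj.symm⟩

private lemma sum_Icc_split (f : ℕ → ℝ) {a b c : ℕ} (h1 : a ≤ b + 1) (h2 : b ≤ c) :
    ∑ i ∈ Icc a c, f i = ∑ i ∈ Icc a b, f i + ∑ i ∈ Icc (b+1) c, f i := by
  have hdisj : Disjoint (Icc a b) (Icc (b+1) c) := by
    rw [Finset.disjoint_left]
    intro x hx hy
    simp only [Finset.mem_Icc] at hx hy
    omega
  rw [← Finset.sum_union hdisj]
  congr 1
  ext x
  simp only [Finset.mem_union, Finset.mem_Icc]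
  omega

private lemma sum_shift (f : ℕ → ℝ) (a b k : ℕ) :
    ∑ i ∈ Icc a b, f (i + k) = ∑ j ∈ Icc (a + k) (b + k), f j := by
  rw [← Finset.map_add_right_Icc, Finset.sum_map]
  rfl

private lemma sum_kth_le {n : ℕ} (t : Fin n → ℝ) (ht : t ∈ cube n) {a b : ℕ}
    (ha : 1 ≤ a) (hb : b ≤ n) :
    ∑ i ∈ Icc a b, kthLargest t i ≤ ((Icc a b).card : ℝ) := by
  calc ∑ i ∈ Icc a b, kthLargest t i ≤ ∑ _i ∈ Icc a b, (1:ℝ) := by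
        apply Finset.sum_le_sum
        intro i hi
        simp only [Finset.mem_Icc] at hi
        obtain ⟨j, hj⟩ := kth_mem t (i := i) (by omega) (by omega)
        rw [hj]
        exact (ht j).2
    _ = _ := by simp
private lemma neg_card_le_sum_kth {n : ℕ} (t : Fin n → ℝ) (ht : t ∈ cube n) {a b : ℕ}
    (ha : 1 ≤ a) (hb : b ≤ n) :
    -((Icc a b).card : ℝ) ≤ ∑ i ∈ Icc a b, kthLargest t i := by
  calc -((Icc a b).card : ℝ) = ∑ _i ∈ Icc a b, (-1:ℝ) := by simp
    _ ≤ ∑ i ∈ Icc a b, kthLargest t i := by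
        apply Finset.sum_le_sum
        intro i hi
        simp only [Finset.mem_Icc] at hi
        obtain ⟨j, hj⟩ := kth_mem t (i := i) (by omega) (by omega)
        rw [hj]
        exact (ht j).1
end AuxGmid

/-- changing at most `k` coordinates decreases `g^(mid)` by at most `4k/n`. -/
theorem gmid_change_k_coords {n k : ℕ} (t t' : Fin n → ℝ)
    (ht : t ∈ cube n) (ht' : t' ∈ cube n)
    (hdiff : (Finset.univ.filter (fun i => t i ≠ t' i)).card ≤ k) :
    gmid t - 4 * k / n ≤ gmid t' := by
  rcases Nat.eq_zero_or_pos n with hn | hn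
  · subst hn
    have he : Finset.Icc (0 / 4 + 1) ((3 * 0 + 3) / 4) = (∅ : Finset ℕ) := rfl
    simp [gmid, he]
  have hnpos : (0:ℝ) < (n:ℝ) := by exact_mod_cast hn
  set a := n / 4 with ha
  set b := (3 * n + 3) / 4 with hb
  have hble : b ≤ n := by omega
  have hm1 : a + 1 ≤ b := by omega
  have h2m : n ≤ 2 * (b - a) := by omega
  set m := b - a with hmdef
  have hmpos : (0:ℝ) < (m:ℝ) := by
    have : 0 < m := by omega
    exact_mod_cast this
  set S := ∑ i ∈ Icc (a+1) b, kthLargest t i with hS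
  set S' := ∑ i ∈ Icc (a+1) b, kthLargest t' i with hS'
  have hgt : gmid t = (m:ℝ)⁻¹ * S := rfl
  have hgt' : gmid t' = (m:ℝ)⁻¹ * S' := rfl
  have hcard : (Icc (a+1) b).card = m := by rw [Nat.card_Icc]; omega
  rcases le_or_gt n (2*k) with hk | hk
  · -- trivial case: 2k ≥ n
    have h1 : S ≤ (m:ℝ) := by
      have := sum_kth_le t ht (a := a+1) (b := b) (by omega) hble
      rwa [hcard] at this
    have h2 : -(m:ℝ) ≤ S' := by
      have := neg_card_le_sum_kth t' ht' (a := a+1) (b := b) (by omega) hble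
      rwa [hcard] at this
    have h3 : (m:ℝ)⁻¹ * S - (m:ℝ)⁻¹ * S' ≤ 2 := by
      rw [← mul_sub]
      calc (m:ℝ)⁻¹ * (S - S') ≤ (m:ℝ)⁻¹ * (2 * m) :=
            mul_le_mul_of_nonneg_left (by linarith) (by positivity)
        _ = 2 := by field_simp
    have h4 : (2:ℝ) ≤ 4 * k / n := by
      rw [le_div_iff₀ hnpos]
      have : (n:ℝ) ≤ 2 * (k:ℝ) := by exact_mod_cast hk
      linarith
    rw [hgt, hgt']
    linarith
  · -- main case: 2k < n
    have hkm : k < m := by omega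
    set u := min b (n - k) with hu
    have hua : a ≤ u := by omega
    have hub : u ≤ b := by omega
    have hukn : u + k ≤ n := by omega
    have hbuk : b ≤ u + k := by omega
    have hakb : a + k ≤ b := by omega
    have hstep2 : ∑ i ∈ Icc (a+1) u, kthLargest t (i+k)
        ≤ ∑ i ∈ Icc (a+1) u, kthLargest t' i := by
      apply Finset.sum_le_sum
      intro i hi
      simp only [Finset.mem_Icc] at hi
      exact kth_shift t t' hdiff (by omega) (by omega)
    rw [sum_shift, show a + 1 + k = a + k + 1 from by omega] at hstep2
    have hsplit1 : S' = (∑ i ∈ Icc (a+1) u, kthLargest t' i)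
        + ∑ i ∈ Icc (u+1) b, kthLargest t' i := sum_Icc_split _ (by omega) hub
    have hsplit2 : ∑ j ∈ Icc (a+k+1) (u+k), kthLargest t j
        = (∑ j ∈ Icc (a+k+1) b, kthLargest t j)
          + ∑ j ∈ Icc (b+1) (u+k), kthLargest t j := sum_Icc_split _ (by omega) hbuk
    have hsplit3 : S = (∑ i ∈ Icc (a+1) (a+k), kthLargest t i)
        + ∑ i ∈ Icc (a+k+1) b, kthLargest t i := sum_Icc_split _ (by omega) hakb
    have hstep3 : -(((Icc (u+1) b).card : ℕ) : ℝ) ≤ ∑ i ∈ Icc (u+1) b, kthLargest t' i :=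
      neg_card_le_sum_kth t' ht' (by omega) hble
    have hstep5 : -(((Icc (b+1) (u+k)).card : ℕ) : ℝ) ≤ ∑ j ∈ Icc (b+1) (u+k), kthLargest t j :=
      neg_card_le_sum_kth t ht (by omega) hukn
    have hstep7 : ∑ i ∈ Icc (a+1) (a+k), kthLargest t i ≤ (((Icc (a+1) (a+k)).card : ℕ) : ℝ) :=
      sum_kth_le t ht (by omega) (by omega)
    have hcards : (Icc (u+1) b).card + (Icc (b+1) (u+k)).card = k
        ∧ (Icc (a+1) (a+k)).card = k := by
      rw [Nat.card_Icc, Nat.card_Icc, Nat.card_Icc]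
      omega
    have hkey : S - S' ≤ 2 * (k:ℝ) := by
      obtain ⟨hc1, hc2⟩ := hcards
      have hc1' : (((Icc (u+1) b).card : ℕ) : ℝ) + (((Icc (b+1) (u+k)).card : ℕ) : ℝ) = (k:ℝ) := by
        exact_mod_cast hc1
      have hc2' : (((Icc (a+1) (a+k)).card : ℕ) : ℝ) = (k:ℝ) := by exact_mod_cast hc2
      linarith
    have hmono : (m:ℝ)⁻¹ * (S - S') ≤ (m:ℝ)⁻¹ * (2 * k) :=
      mul_le_mul_of_nonneg_left hkey (by positivity)
    have hdiv : (m:ℝ)⁻¹ * (2 * k) ≤ 4 * k / n := by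
      rw [inv_mul_eq_div, div_le_div_iff₀ hmpos hnpos]
      have hcast : (n:ℝ) ≤ 2 * (m:ℝ) := by exact_mod_cast h2m
      have hk0 : (0:ℝ) ≤ (k:ℝ) := Nat.cast_nonneg k
      nlinarith
    rw [hgt, hgt']
    rw [mul_sub] at hmono
    linarith
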